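/- arXiv:1810.02204 — 3 statements merged into one kernel-verified Lean document; each statement's English description precedes it below -/
import Mathlib

section
/- For every complex number s with Re(s) > 0 and s ≠ 1, the alternating Dirichlet series Σ_{n=1}^∞ (-1)^{n+1} n^{-s} converges (as the limit of its partial sums) and its sum equals (1 - 2^{1-s}) · ζ(s). -/
open Filter Finset Complex

noncomputable section

private def etaF : ℂ → ℂ := fun z => 1 - (2 : ℂ) ^ ((1 : ℂ) - z)

private def etaG (k : ℕ) (z : ℂ) : ℂ :=
  ((2 * k + 1 : ℕ) : ℂ) ^ (-z) - ((2 * k + 2 : ℕ) : ℂ) ^ (-z)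

private lemma etaG_norm_le (z : ℂ) (hz : 0 < z.re) (k : ℕ) :
    ‖etaG k z‖ ≤ ‖z‖ * (2 * (k : ℝ) + 1) ^ (-z.re - 1) := by
  set a : ℝ := 2 * (k : ℝ) + 1 with ha_def
  have ha : 0 < a := by positivity
  set φ : ℝ → ℂ := fun t => (t : ℂ) ^ (-z) with hφ
  set C : ℝ := ‖z‖ * a ^ (-z.re - 1) with hC
  have key : ∀ t ∈ Set.Icc a (a + 1),
      HasDerivWithinAt φ (-z * (t : ℂ) ^ (-z - 1)) (Set.Icc a (a + 1)) t := by
    intro t ht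
    have h0 : 0 < t := lt_of_lt_of_le ha ht.1
    have := ((hasDerivAt_id ((t : ℝ) : ℂ)).cpow_const (c := -z)
      (by simpa using Complex.ofReal_mem_slitPlane.mpr h0)).comp_ofReal
    simpa [mul_one] using this.hasDerivWithinAt
  have bound : ∀ t ∈ Set.Icc a (a + 1), ‖-z * (t : ℂ) ^ (-z - 1)‖ ≤ C := by
    intro t ht
    have h0 : 0 < t := lt_of_lt_of_le ha ht.1
    have h1 : ‖(-z : ℂ)‖ = ‖z‖ := norm_neg z
    have h2 : ‖((t : ℝ) : ℂ) ^ (-z - 1)‖ = t ^ (-z.re - 1) := by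
      rw [Complex.norm_cpow_eq_rpow_re_of_pos h0]
      norm_num
    rw [norm_mul, h1, h2]
    have h3 : t ^ (-z.re - 1) ≤ a ^ (-z.re - 1) :=
      Real.rpow_le_rpow_of_nonpos ha ht.1 (by linarith)
    exact mul_le_mul_of_nonneg_left h3 (norm_nonneg z)
  have h := (convex_Icc a (a + 1)).norm_image_sub_le_of_norm_hasDerivWithin_le
    key bound (Set.left_mem_Icc.mpr (by linarith)) (Set.right_mem_Icc.mpr (by linarith))
  have hnorm : ‖(a + 1 : ℝ) - a‖ = 1 := by norm_num
  rw [hnorm, mul_one] at h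
  have hfa : φ a = ((2 * k + 1 : ℕ) : ℂ) ^ (-z) := by
    simp only [hφ, ha_def]
    congr 1
    push_cast
    ring
  have hfb : φ (a + 1) = ((2 * k + 2 : ℕ) : ℂ) ^ (-z) := by
    simp only [hφ, ha_def]
    congr 1
    push_cast
    ring
  calc ‖etaG k z‖ = ‖φ (a + 1) - φ a‖ := by rw [hfa, hfb, etaG, norm_sub_rev]
    _ ≤ C := h

private lemma summable_maj {σ : ℝ} (hσ : 0 < σ) :
    Summable (fun k : ℕ => (2 * (k : ℝ) + 1) ^ (-σ - 1)) := by
  have h1 : Summable (fun n : ℕ => ((n : ℝ) + 1) ^ (-σ - 1)) := by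
    have h0 : Summable (fun n : ℕ => (n : ℝ) ^ (-σ - 1)) :=
      Real.summable_nat_rpow.mpr (by linarith)
    have := (summable_nat_add_iff 1).mpr h0
    simpa [Nat.cast_add] using this
  refine h1.of_nonneg_of_le (fun k => by positivity) (fun k => ?_)
  exact Real.rpow_le_rpow_of_nonpos (by positivity) (by push_cast; linarith) (by linarith)

private lemma etaG_differentiable (k : ℕ) : Differentiable ℂ (etaG k) := by
  have h1 : Differentiable ℂ (fun z : ℂ => ((2 * k + 1 : ℕ) : ℂ) ^ (-z)) :=
    fun z => (differentiableAt_id.neg).const_cpow (Or.inl (Nat.cast_ne_zero.mpr (by omega)))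
  have h2 : Differentiable ℂ (fun z : ℂ => ((2 * k + 2 : ℕ) : ℂ) ^ (-z)) :=
    fun z => (differentiableAt_id.neg).const_cpow (Or.inl (Nat.cast_ne_zero.mpr (by omega)))
  exact h1.sub h2

private lemma A_diffOn :
    DifferentiableOn ℂ (fun z => ∑' k, etaG k z) {z : ℂ | 0 < z.re} := by
  intro s hs
  simp only [Set.mem_setOf_eq] at hs
  set U : Set ℂ := {z | s.re / 2 < z.re} ∩ {z | ‖z‖ < ‖s‖ + 1} with hU_def
  have hUopen : IsOpen U :=
    (isOpen_lt continuous_const continuous_re).inter (isOpen_lt continuous_norm continuous_const)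
  have hsU : s ∈ U := ⟨by simpa using half_lt_self hs, by simp⟩
  have hdiff : DifferentiableOn ℂ (fun z => ∑' k, etaG k z) U := by
    refine differentiableOn_tsum_of_summable_norm
      (u := fun k => (‖s‖ + 1) * (2 * (k : ℝ) + 1) ^ (-(s.re / 2) - 1))
      ((summable_maj (half_pos hs)).mul_left _)
      (fun k => (etaG_differentiable k).differentiableOn) hUopen ?_
    intro k w hw
    obtain ⟨hw1, hw2⟩ := hw
    simp only [Set.mem_setOf_eq] at hw1 hw2
    have hwre : 0 < w.re := lt_trans (half_pos hs) hw1
    refine (etaG_norm_le w hwre k).trans ?_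
    have h1 : (2 * (k : ℝ) + 1) ^ (-w.re - 1) ≤ (2 * (k : ℝ) + 1) ^ (-(s.re / 2) - 1) :=
      Real.rpow_le_rpow_of_exponent_le (by push_cast; linarith) (by linarith)
    have h2 : ‖w‖ ≤ ‖s‖ + 1 := le_of_lt hw2
    exact mul_le_mul h2 h1 (Real.rpow_nonneg (by positivity) _) (by positivity)
  exact ((hdiff.differentiableAt (hUopen.mem_nhds hsU)).differentiableWithinAt)

private lemma etaF_differentiable : Differentiable ℂ etaF := by
  refine (differentiable_const (1 : ℂ)).sub ?_
  exact fun z => ((differentiable_const (1 : ℂ)).sub differentiable_id).differentiableAt.const_cpow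
    (Or.inl two_ne_zero)

private lemma etaF_one : etaF 1 = 0 := by simp [etaF]

/-- The analytic completion of `(1 - 2^(1-s)) ζ(s)`. -/
private def etaB : ℂ → ℂ := fun z =>
  etaF z * (riemannZeta z - (z - 1)⁻¹ * (Gammaℝ z)⁻¹) + dslope etaF 1 z * (Gammaℝ z)⁻¹

private lemma Z_diff : Differentiable ℂ (fun z => riemannZeta z - (z - 1)⁻¹ * (Gammaℝ z)⁻¹) := by
  intro z
  rcases eq_or_ne z 1 with rfl | hz
  · have h := HurwitzZeta.differentiableAt_hurwitzZeta_sub_one_div (0 : UnitAddCircle)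
    have he : (fun s : ℂ => HurwitzZeta.hurwitzZeta 0 s - 1 / (s - 1) / Gammaℝ s)
        = fun s : ℂ => riemannZeta s - (s - 1)⁻¹ * (Gammaℝ s)⁻¹ := by
      funext s
      rw [HurwitzZeta.hurwitzZeta_zero, div_div, one_div, mul_inv]
    rwa [he] at h
  · refine (differentiableAt_riemannZeta hz).sub ?_
    exact (((differentiableAt_id (x := z)).sub_const (1 : ℂ)).inv (sub_ne_zero.mpr hz)).mul
      (differentiable_Gammaℝ_inv.differentiableAt)

private lemma etaB_diff : Differentiable ℂ etaB := by
  have hds : Differentiable ℂ (dslope etaF 1) := by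
    have := (Complex.differentiableOn_dslope (c := 1) (s := (Set.univ : Set ℂ))
      Filter.univ_mem).mpr etaF_differentiable.differentiableOn
    exact differentiableOn_univ.mp this
  exact ((etaF_differentiable).mul Z_diff).add (hds.mul differentiable_Gammaℝ_inv)

private lemma etaB_eq {z : ℂ} (hz : 0 < z.re) (hz1 : z ≠ 1) :
    etaB z = etaF z * riemannZeta z := by
  have hG : Gammaℝ z ≠ 0 := Complex.Gammaℝ_ne_zero_of_re_pos hz
  have hz1' : z - 1 ≠ 0 := sub_ne_zero.mpr hz1
  rw [etaB, dslope_of_ne _ hz1, slope_def_field, etaF_one]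
  field_simp
  ring

private lemma A_eq {z : ℂ} (hz : 1 < z.re) :
    ∑' k, etaG k z = etaF z * riemannZeta z := by
  have hz0 : z ≠ 0 := by rintro rfl; norm_num at hz
  have hzn : -z ≠ 0 := neg_ne_zero.mpr hz0
  set f : ℕ → ℂ := fun n => ((n : ℕ) : ℂ) ^ (-z) with hf_def
  have hf : Summable f := by
    have := Complex.summable_one_div_nat_cpow.mpr hz
    simpa [hf_def, cpow_neg, one_div] using this
  have hfe : Summable (fun k => f (2 * k)) :=
    hf.comp_injective (fun a b hab => by omega)
  have hfo : Summable (fun k => f (2 * k + 1)) :=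
    hf.comp_injective (fun a b hab => by omega)
  have hf2 : Summable (fun k => f (2 * k + 2)) :=
    hf.comp_injective (fun a b hab => by omega)
  have hzeta : riemannZeta z = ∑' n, f n := by
    rw [zeta_eq_tsum_one_div_nat_cpow hz]
    exact tsum_congr fun n => by
      show 1 / (n : ℂ) ^ z = (n : ℂ) ^ (-z)
      rw [cpow_neg, one_div]
  have heven : ∑' k, f (2 * k) = (2 : ℂ) ^ (-z) * riemannZeta z := by
    rw [hzeta, ← tsum_mul_left]
    refine tsum_congr fun k => ?_
    show ((2 * k : ℕ) : ℂ) ^ (-z) = (2 : ℂ) ^ (-z) * ((k : ℕ) : ℂ) ^ (-z)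
    have hcast : ((2 * k : ℕ) : ℂ) = ((2 : ℝ) : ℂ) * ((k : ℝ) : ℂ) := by push_cast; ring
    rw [hcast, Complex.mul_cpow_ofReal_nonneg (by norm_num) (Nat.cast_nonneg k)]
    norm_cast
  have hsplit : ∑' k, f (2 * k) + ∑' k, f (2 * k + 1) = ∑' n, f n :=
    tsum_even_add_odd hfe hfo
  have hodd : ∑' k, f (2 * k + 1) = riemannZeta z - (2 : ℂ) ^ (-z) * riemannZeta z := by
    rw [eq_sub_iff_add_eq, ← heven, add_comm, hsplit, hzeta]
  have hf0 : f 0 = 0 := by simp [hf_def, Complex.zero_cpow hzn]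
  have h2 : ∑' k, f (2 * k + 2) = (2 : ℂ) ^ (-z) * riemannZeta z := by
    have := hfe.tsum_eq_zero_add
    simp only [Nat.mul_zero, hf0, zero_add] at this
    rw [← heven, this]
    exact tsum_congr fun k => by ring_nf
  have hsub : ∑' k, etaG k z = ∑' k, f (2 * k + 1) - ∑' k, f (2 * k + 2) :=
    (hfo.hasSum.sub hf2.hasSum).tsum_eq
  rw [hsub, hodd, h2, etaF]
  have h21 : (2 : ℂ) ^ ((1 : ℂ) - z) = 2 * (2 : ℂ) ^ (-z) := by
    rw [sub_eq_add_neg, Complex.cpow_add _ _ two_ne_zero, Complex.cpow_one]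
  rw [h21]
  ring

private lemma A_eq_etaB {z : ℂ} (hz : 0 < z.re) :
    ∑' k, etaG k z = etaB z := by
  have hUopen : IsOpen {w : ℂ | 0 < w.re} := isOpen_lt continuous_const continuous_re
  have hA : AnalyticOnNhd ℂ (fun w => ∑' k, etaG k w) {w : ℂ | 0 < w.re} :=
    A_diffOn.analyticOnNhd hUopen
  have hB : AnalyticOnNhd ℂ etaB {w : ℂ | 0 < w.re} :=
    (etaB_diff.differentiableOn).analyticOnNhd hUopen
  have hpre : IsPreconnected {w : ℂ | 0 < w.re} := (convex_halfSpace_re_gt 0).isPreconnected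
  have h2mem : (2 : ℂ) ∈ {w : ℂ | 0 < w.re} := by norm_num
  have heq : (fun w => ∑' k, etaG k w) =ᶠ[nhds (2 : ℂ)] etaB := by
    have hopen : IsOpen {w : ℂ | 1 < w.re} := isOpen_lt continuous_const continuous_re
    refine Filter.eventuallyEq_of_mem (hopen.mem_nhds (by norm_num)) fun w hw => ?_
    simp only [Set.mem_setOf_eq] at hw
    have hw1 : w ≠ 1 := by rintro rfl; simp at hw
    rw [A_eq hw, etaB_eq (lt_trans one_pos hw) hw1]
  exact hA.eqOn_of_preconnected_of_eventuallyEq hB hpre h2mem heq hz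

private lemma partial_even (s : ℂ) (M : ℕ) :
    ∑ n ∈ Finset.range (2 * M), (-1 : ℂ) ^ n * ((n + 1 : ℕ) : ℂ) ^ (-s)
      = ∑ k ∈ Finset.range M, etaG k s := by
  induction M with
  | zero => simp
  | succ M ih =>
    have h2 : 2 * (M + 1) = (2 * M + 1) + 1 := by ring
    rw [h2, Finset.sum_range_succ, Finset.sum_range_succ, ih, Finset.sum_range_succ]
    have he : (-1 : ℂ) ^ (2 * M) = 1 := by
      rw [pow_mul]; norm_num
    have ho : (-1 : ℂ) ^ (2 * M + 1) = -1 := by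
      rw [pow_succ, he]; ring
    rw [he, ho, etaG]
    have e1 : 2 * M + 1 + 1 = 2 * M + 2 := by ring
    rw [e1]
    ring

/-- For every complex `s` with `Re s > 0` and `s ≠ 1`, the alternating Dirichlet series
`Σ_{n=1}^∞ (-1)^(n+1) n^(-s)` converges (as the limit of its partial sums) and its sum
equals `(1 - 2^(1-s)) * ζ(s)`. -/
theorem alternating_series_eq_eta_factor_mul_zeta (s : ℂ) (hs : 0 < s.re) (hs1 : s ≠ 1) :
    Filter.Tendsto
      (fun N : ℕ => ∑ n ∈ Finset.range N, (-1 : ℂ) ^ n * ((n + 1 : ℕ) : ℂ) ^ (-s))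
      Filter.atTop
      (nhds ((1 - (2 : ℂ) ^ ((1 : ℂ) - s)) * riemannZeta s)) := by
  set L : ℂ := (1 - (2 : ℂ) ^ ((1 : ℂ) - s)) * riemannZeta s with hL
  -- summability of the paired series
  have hsum : Summable (fun k => etaG k s) := by
    refine Summable.of_norm ?_
    refine Summable.of_nonneg_of_le (fun k => norm_nonneg _) (fun k => etaG_norm_le s hs k)
      (((summable_maj hs).mul_left ‖s‖))
  have htsum : ∑' k, etaG k s = L := by
    rw [A_eq_etaB hs, etaB_eq hs hs1, etaF]
  have hpart : Filter.Tendsto (fun M : ℕ => ∑ k ∈ Finset.range M, etaG k s)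
      Filter.atTop (nhds L) := by
    rw [← htsum]; exact hsum.hasSum.tendsto_sum_nat
  -- the terms tend to zero
  have hterm : Filter.Tendsto (fun n : ℕ => ((n + 1 : ℕ) : ℂ) ^ (-s)) Filter.atTop (nhds 0) := by
    rw [tendsto_zero_iff_norm_tendsto_zero]
    have hnorm : ∀ n : ℕ, ‖((n + 1 : ℕ) : ℂ) ^ (-s)‖ = ((n + 1 : ℕ) : ℝ) ^ (-s.re) := by
      intro n
      rw [Complex.norm_natCast_cpow_of_pos (Nat.succ_pos n)]
      simp
    simp only [hnorm]
    have h1 : Filter.Tendsto (fun x : ℝ => x ^ (-s.re)) Filter.atTop (nhds 0) :=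
      tendsto_rpow_neg_atTop hs
    have h2 : Filter.Tendsto (fun n : ℕ => ((n + 1 : ℕ) : ℝ)) Filter.atTop Filter.atTop :=
      tendsto_natCast_atTop_atTop.comp (tendsto_add_atTop_nat 1)
    exact h1.comp h2
  -- combine even and odd partial sums
  rw [Metric.tendsto_atTop]
  intro ε hε
  obtain ⟨M₀, hM₀⟩ := Metric.tendsto_atTop.mp hpart (ε / 2) (half_pos hε)
  obtain ⟨N₁, hN₁⟩ := Metric.tendsto_atTop.mp hterm (ε / 2) (half_pos hε)
  refine ⟨2 * (M₀ + N₁) + 2, fun n hn => ?_⟩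
  rcases Nat.even_or_odd n with ⟨m, hm⟩ | ⟨m, hm⟩
  · have hm' : n = 2 * m := by omega
    have hmM : M₀ ≤ m := by omega
    rw [hm', partial_even s m]
    exact lt_trans (hM₀ m hmM) (half_lt_self hε)
  · have hm' : n = 2 * m + 1 := by omega
    have hmM : M₀ ≤ m := by omega
    have hmN : N₁ ≤ 2 * m := by omega
    have hpow : (-1 : ℂ) ^ (2 * m) = 1 := by rw [pow_mul]; norm_num
    rw [hm', Finset.sum_range_succ, partial_even s m, hpow, one_mul]
    have d1 : dist (∑ k ∈ Finset.range m, etaG k s) L < ε / 2 := hM₀ m hmM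
    have d2 : ‖((2 * m + 1 : ℕ) : ℂ) ^ (-s)‖ < ε / 2 := by
      have := hN₁ (2 * m) hmN
      rwa [dist_zero_right] at this
    set P : ℂ := ∑ k ∈ Finset.range m, etaG k s
    set t : ℂ := ((2 * m + 1 : ℕ) : ℂ) ^ (-s)
    calc dist (P + t) L ≤ dist (P + t) P + dist P L := dist_triangle _ _ _
      _ < ε / 2 + ε / 2 := by
          refine add_lt_add ?_ d1
          rw [dist_eq_norm, add_sub_cancel_left]
          exact d2
      _ = ε := add_halves ε

end
end

section
/- Let σ, ρ, ω be real numbers with 0 < σ < 1, and for y > 0 set h(y) = y^{iω/2} · Σ_{n=1}^∞ (-1)^{n+1} n^{-1} (y/n)^{iω/2} (y/n)^{-σ+iρ}. Then for every real x > 0, the series x^{-iω/2} · Σ_{m=1}^∞ (-1)^{m+1} (m·x)^{-iω/2} · h(m·x) converges (as the limit of its partial sums) and its sum equals (1 - 2^{σ-i(ρ+ω/2)}) · (1 - 2^{(1-σ)+i(ρ+ω/2)}) · ζ(σ - i(ρ + ω/2)) · ζ(1 - σ + i(ρ + ω/2)) · x^{-σ+iρ}. -/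
open Filter Finset Complex

open Topology


namespace EtaAux

noncomputable def etaTerm (s : ℂ) (n : ℕ) : ℂ := (-1 : ℂ) ^ n * ((n + 1 : ℕ) : ℂ) ^ (-s)

noncomputable def etaPair (s : ℂ) (k : ℕ) : ℂ := etaTerm s (2 * k) + etaTerm s (2 * k + 1)

noncomputable def etaFun (s : ℂ) : ℂ := ∑' k, etaPair s k

lemma etaTerm_even (s : ℂ) (k : ℕ) : etaTerm s (2 * k) = ((2 * k + 1 : ℕ) : ℂ) ^ (-s) := by
  simp [etaTerm, pow_mul]

lemma etaTerm_odd (s : ℂ) (k : ℕ) : etaTerm s (2 * k + 1) = -((2 * k + 2 : ℕ) : ℂ) ^ (-s) := by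
  have h : 2 * k + 1 + 1 = 2 * k + 2 := by ring
  rw [etaTerm, h, pow_succ, pow_mul]
  norm_num

lemma hasSum_f {s : ℂ} (hs : 1 < s.re) :
    HasSum (fun n : ℕ => ((n + 1 : ℕ) : ℂ) ^ (-s)) (riemannZeta s) := by
  have hsum : Summable (fun n : ℕ => ((n + 1 : ℕ) : ℂ) ^ (-s)) := by
    have h0 := (summable_nat_add_iff (f := fun n : ℕ => 1 / (n : ℂ) ^ s) 1).2
      (Complex.summable_one_div_nat_cpow.2 hs)
    refine h0.congr fun n => ?_
    push_cast
    rw [cpow_neg, one_div]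
  have h1 : riemannZeta s = ∑' n : ℕ, ((n + 1 : ℕ) : ℂ) ^ (-s) := by
    rw [zeta_eq_tsum_one_div_nat_add_one_cpow hs]
    exact tsum_congr fun n => by push_cast; rw [cpow_neg, one_div]
  exact h1 ▸ hsum.hasSum

lemma hasSum_f_odd {s : ℂ} (hs : 1 < s.re) :
    HasSum (fun k : ℕ => ((2 * k + 2 : ℕ) : ℂ) ^ (-s)) ((2 : ℂ) ^ (-s) * riemannZeta s) := by
  have h := (hasSum_f hs).mul_left ((2 : ℂ) ^ (-s))
  refine h.congr_fun fun k => ?_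
  have h2 : ((2 * k + 2 : ℕ) : ℂ) = (((2 : ℝ)) : ℂ) * (((k + 1 : ℕ) : ℝ) : ℂ) := by
    push_cast; ring
  rw [h2, mul_cpow_ofReal_nonneg (by norm_num) (by positivity)]
  norm_num

lemma hasSum_f_even {s : ℂ} (hs : 1 < s.re) :
    HasSum (fun k : ℕ => ((2 * k + 1 : ℕ) : ℂ) ^ (-s))
      (riemannZeta s - (2 : ℂ) ^ (-s) * riemannZeta s) := by
  have hsum : Summable (fun n : ℕ => ((n + 1 : ℕ) : ℂ) ^ (-s)) := (hasSum_f hs).summable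
  have he : Summable (fun k : ℕ => ((2 * k + 1 : ℕ) : ℂ) ^ (-s)) := by
    have hinj : Function.Injective (fun k : ℕ => 2 * k) := fun a b hab => by
      simpa using hab
    refine (hsum.comp_injective hinj).congr fun k => ?_
    simp only [Function.comp]
  obtain ⟨a, ha⟩ := he
  have heven' : HasSum (fun k : ℕ => ((2 * k + 1 : ℕ) : ℂ) ^ (-s)) a := ha
  have hodd' : HasSum (fun k : ℕ => ((2 * k + 2 : ℕ) : ℂ) ^ (-s))
      ((2 : ℂ) ^ (-s) * riemannZeta s) := hasSum_f_odd hs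
  have htot : HasSum (fun n : ℕ => ((n + 1 : ℕ) : ℂ) ^ (-s))
      (a + (2 : ℂ) ^ (-s) * riemannZeta s) :=
    HasSum.even_add_odd (heven'.congr_fun fun k => by norm_num)
      (hodd'.congr_fun fun k => by rw [show 2 * k + 1 + 1 = 2 * k + 2 from by ring])
  have := htot.unique (hasSum_f hs)
  have ha' : a = riemannZeta s - (2 : ℂ) ^ (-s) * riemannZeta s := by
    linear_combination this
  exact ha' ▸ ha

lemma hasSum_etaPair {s : ℂ} (hs : 1 < s.re) :
    HasSum (etaPair s) ((1 - (2 : ℂ) ^ (1 - s)) * riemannZeta s) := by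
  have h := (hasSum_f_even hs).add ((hasSum_f_odd hs).neg)
  have h2 : (2 : ℂ) ^ ((1 : ℂ) - s) = 2 * (2 : ℂ) ^ (-s) := by
    rw [show (1 : ℂ) - s = 1 + (-s) by ring, cpow_add _ _ (two_ne_zero), cpow_one]
  have h3 : riemannZeta s - (2:ℂ) ^ (-s) * riemannZeta s + -((2:ℂ) ^ (-s) * riemannZeta s)
      = (1 - (2 : ℂ) ^ (1 - s)) * riemannZeta s := by
    rw [h2]; ring
  rw [← h3]
  refine h.congr_fun fun k => ?_
  rw [etaPair, etaTerm_even, etaTerm_odd]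

lemma etaFun_eq_of_one_lt {s : ℂ} (hs : 1 < s.re) :
    etaFun s = (1 - (2 : ℂ) ^ (1 - s)) * riemannZeta s := (hasSum_etaPair hs).tsum_eq


lemma etaPair_eq (s : ℂ) (k : ℕ) :
    etaPair s k = ((2 * k + 1 : ℕ) : ℂ) ^ (-s) - ((2 * k + 2 : ℕ) : ℂ) ^ (-s) := by
  rw [etaPair, etaTerm_even, etaTerm_odd]; ring

lemma etaPair_norm_le {s : ℂ} (hs : 0 < s.re) (k : ℕ) :
    ‖etaPair s k‖ ≤ ‖s‖ * ((2 * k + 1 : ℝ)) ^ (-s.re - 1) := by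
  have ha : (0 : ℝ) < 2 * k + 1 := by positivity
  set a : ℝ := 2 * k + 1 with ha_def
  set b : ℝ := 2 * k + 2 with hb_def
  have hab : a ≤ b := by rw [ha_def, hb_def]; linarith
  have hd : ∀ x ∈ Set.Icc a b,
      HasDerivWithinAt (fun y : ℝ => (y : ℂ) ^ (-s)) (-s * (x : ℂ) ^ (-s - 1)) (Set.Icc a b) x := by
    intro x hx
    have hx0 : (0 : ℝ) < x := lt_of_lt_of_le ha hx.1
    have h1 : HasDerivAt (fun z : ℂ => z ^ (-s)) (-s * (x : ℂ) ^ (-s - 1) * 1) (x : ℂ) :=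
      (hasDerivAt_id ((x : ℝ) : ℂ)).cpow_const (by simp [hx0])
    have h2 : HasDerivAt (fun y : ℝ => (y : ℂ) ^ (-s)) (-s * (x : ℂ) ^ (-s - 1) * 1) x :=
      h1.comp_ofReal
    simpa using h2.hasDerivWithinAt
  have hbound : ∀ x ∈ Set.Ico a b, ‖-s * (x : ℂ) ^ (-s - 1)‖ ≤ ‖s‖ * a ^ (-s.re - 1) := by
    intro x hx
    have hx0 : (0 : ℝ) < x := lt_of_lt_of_le ha hx.1
    rw [norm_mul, norm_neg]
    refine mul_le_mul_of_nonneg_left ?_ (norm_nonneg s)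
    rw [Complex.norm_cpow_eq_rpow_re_of_pos hx0]
    have : (-s - 1).re = -s.re - 1 := by simp
    rw [this]
    exact Real.rpow_le_rpow_of_nonpos ha hx.1 (by linarith)
  have := norm_image_sub_le_of_norm_deriv_le_segment' hd hbound b
    (Set.right_mem_Icc.2 hab)
  have hba : b - a = 1 := by rw [ha_def, hb_def]; ring
  rw [hba, mul_one] at this
  calc ‖etaPair s k‖ = ‖(b : ℂ) ^ (-s) - (a : ℂ) ^ (-s)‖ := by
        rw [etaPair_eq]
        rw [show ((2 * k + 1 : ℕ) : ℂ) = ((a : ℝ) : ℂ) by rw [ha_def]; push_cast; ring,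
          show ((2 * k + 2 : ℕ) : ℂ) = ((b : ℝ) : ℂ) by rw [hb_def]; push_cast; ring,
          norm_sub_rev]
    _ ≤ ‖s‖ * a ^ (-s.re - 1) := this

lemma summable_majorant {δ : ℝ} (hδ : 0 < δ) :
    Summable (fun k : ℕ => ((2 * k + 1 : ℝ)) ^ (-δ - 1)) := by
  have h1 : Summable (fun k : ℕ => ((k + 1 : ℝ)) ^ (-δ - 1)) := by
    have := (Real.summable_nat_rpow (p := -δ - 1)).2 (by linarith)
    exact_mod_cast (summable_nat_add_iff 1).2 this
  refine h1.of_nonneg_of_le (fun k => by positivity) (fun k => ?_)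
  refine Real.rpow_le_rpow_of_nonpos (by positivity) (by push_cast; linarith) (by linarith)

lemma summable_etaPair {s : ℂ} (hs : 0 < s.re) : Summable (etaPair s) := by
  refine Summable.of_norm_bounded ((summable_majorant hs).mul_left ‖s‖) (etaPair_norm_le hs)


lemma sum_range_two_mul (s : ℂ) (N : ℕ) :
    ∑ n ∈ Finset.range (2 * N), etaTerm s n = ∑ k ∈ Finset.range N, etaPair s k := by
  induction N with
  | zero => simp
  | succ N ih =>
    rw [show 2 * (N + 1) = 2 * N + 1 + 1 by ring, Finset.sum_range_succ, Finset.sum_range_succ,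
      Finset.sum_range_succ, ih, etaPair]
    ring

lemma etaTerm_tendsto_zero {s : ℂ} (hs : 0 < s.re) :
    Tendsto (etaTerm s) atTop (𝓝 0) := by
  rw [tendsto_zero_iff_norm_tendsto_zero]
  have hnorm : ∀ n : ℕ, ‖etaTerm s n‖ = ((n + 1 : ℝ)) ^ (-s.re) := by
    intro n
    rw [etaTerm, norm_mul, norm_pow, norm_neg, norm_one, one_pow, one_mul,
      show ((n + 1 : ℕ) : ℂ) = (((n + 1 : ℝ)) : ℂ) by push_cast; ring,
      Complex.norm_cpow_eq_rpow_re_of_pos (by positivity)]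
    simp
  simp_rw [hnorm]
  have h1 : Tendsto (fun n : ℕ => (n + 1 : ℝ)) atTop atTop :=
    tendsto_atTop_add_const_right _ 1 tendsto_natCast_atTop_atTop
  exact (tendsto_rpow_neg_atTop hs).comp h1

lemma tendsto_of_even_odd {f : ℕ → ℂ} {l : ℂ}
    (he : Tendsto (fun k => f (2 * k)) atTop (𝓝 l))
    (ho : Tendsto (fun k => f (2 * k + 1)) atTop (𝓝 l)) : Tendsto f atTop (𝓝 l) := by
  rw [tendsto_atTop'] at he ho ⊢
  intro u hu
  obtain ⟨K₁, hK₁⟩ := he u hu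
  obtain ⟨K₂, hK₂⟩ := ho u hu
  refine ⟨2 * max K₁ K₂ + 2, fun n hn => ?_⟩
  rcases Nat.even_or_odd n with ⟨k, hk⟩ | ⟨k, hk⟩
  · have h : n = 2 * k := by omega
    rw [h]
    exact hK₁ k (by omega)
  · have h : n = 2 * k + 1 := by omega
    rw [h]
    exact hK₂ k (by omega)

lemma tendsto_partial_eta {s : ℂ} (hs : 0 < s.re) :
    Tendsto (fun N : ℕ => ∑ n ∈ Finset.range N, etaTerm s n) atTop (𝓝 (etaFun s)) := by
  have hsum : HasSum (etaPair s) (etaFun s) := (summable_etaPair hs).hasSum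
  have he : Tendsto (fun K : ℕ => ∑ n ∈ Finset.range (2 * K), etaTerm s n) atTop
      (𝓝 (etaFun s)) :=
    hsum.tendsto_sum_nat.congr fun K => (sum_range_two_mul s K).symm
  have h2K : Tendsto (fun K : ℕ => 2 * K) atTop atTop :=
    tendsto_atTop_mono (fun K => by simp; omega) tendsto_id
  have hterm : Tendsto (fun K : ℕ => etaTerm s (2 * K)) atTop (𝓝 0) :=
    (etaTerm_tendsto_zero hs).comp h2K
  have ho : Tendsto (fun K : ℕ => ∑ n ∈ Finset.range (2 * K + 1), etaTerm s n) atTop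
      (𝓝 (etaFun s)) := by
    have h3 := he.add hterm
    rw [add_zero] at h3
    exact h3.congr fun K => (Finset.sum_range_succ _ _).symm
  exact tendsto_of_even_odd he ho


def U : Set ℂ := {s : ℂ | 0 < s.re}

lemma isOpen_U : IsOpen U := isOpen_lt continuous_const Complex.continuous_re

lemma etaPair_differentiable (k : ℕ) : Differentiable ℂ (fun s : ℂ => etaPair s k) := by
  have h1 : Differentiable ℂ (fun s : ℂ => ((2 * k + 1 : ℕ) : ℂ) ^ (-s)) :=
    (differentiable_id.neg).const_cpow (Or.inl (Nat.cast_ne_zero.2 (by omega)))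
  have h2 : Differentiable ℂ (fun s : ℂ => ((2 * k + 2 : ℕ) : ℂ) ^ (-s)) :=
    (differentiable_id.neg).const_cpow (Or.inl (Nat.cast_ne_zero.2 (by omega)))
  have heq : (fun s : ℂ => etaPair s k)
      = fun s : ℂ => ((2 * k + 1 : ℕ) : ℂ) ^ (-s) - ((2 * k + 2 : ℕ) : ℂ) ^ (-s) :=
    funext fun s => etaPair_eq s k
  rw [heq]
  exact h1.sub h2

lemma tlu_etaPair : TendstoLocallyUniformlyOn
    (fun (K : ℕ) (s : ℂ) => ∑ k ∈ Finset.range K, etaPair s k) etaFun atTop U := by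
  rw [tendstoLocallyUniformlyOn_iff_forall_isCompact isOpen_U]
  intro K hKU hK
  rcases K.eq_empty_or_nonempty with rfl | hne
  · simp [TendstoUniformlyOn]
  obtain ⟨z₀, hz₀K, hz₀min⟩ := hK.exists_isMinOn hne Complex.continuous_re.continuousOn
  obtain ⟨R, hR⟩ := hK.exists_bound_of_continuousOn continuousOn_id
  set δ : ℝ := z₀.re with hδ_def
  have hδ : 0 < δ := hKU hz₀K
  have hmaj : Summable (fun k : ℕ => R * ((2 * k + 1 : ℝ)) ^ (-δ - 1)) :=
    (summable_majorant hδ).mul_left R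
  have hbnd : ∀ (k : ℕ) (s : ℂ), s ∈ K → ‖etaPair s k‖ ≤ R * ((2 * k + 1 : ℝ)) ^ (-δ - 1) := by
    intro k s hsK
    have hs : 0 < s.re := hKU hsK
    refine (etaPair_norm_le hs k).trans ?_
    have hk0 : (0 : ℝ) ≤ (k : ℝ) := Nat.cast_nonneg k
    have h1 : ((2 * k + 1 : ℝ)) ^ (-s.re - 1) ≤ ((2 * k + 1 : ℝ)) ^ (-δ - 1) := by
      refine Real.rpow_le_rpow_of_exponent_le (by linarith) ?_
      have h2 : z₀.re ≤ s.re := isMinOn_iff.mp hz₀min s hsK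
      linarith
    have hsR : ‖s‖ ≤ R := hR s hsK
    refine mul_le_mul hsR h1 (by positivity) (le_trans (norm_nonneg _) hsR)
  have := tendstoUniformlyOn_tsum_nat hmaj (fun k s hs => hbnd k s hs)
  exact this

lemma etaFun_differentiableOn : DifferentiableOn ℂ etaFun U := by
  refine tlu_etaPair.differentiableOn (Eventually.of_forall fun K => ?_) isOpen_U
  exact (Differentiable.fun_sum fun k _ => etaPair_differentiable k).differentiableOn

noncomputable def Zfun (s : ℂ) : ℂ :=
  ((s - 1) * completedRiemannZeta₀ s - (s - 1) / s + 1) * (Gammaℝ s)⁻¹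

lemma Zfun_eq {s : ℂ} (hs : s ≠ 0) (hs1 : s ≠ 1) : Zfun s = (s - 1) * riemannZeta s := by
  rw [Zfun, riemannZeta_def_of_ne_zero hs, completedRiemannZeta_eq]
  have h1s : (1 : ℂ) - s ≠ 0 := sub_ne_zero.2 (Ne.symm hs1)
  have : (s - 1) * completedRiemannZeta₀ s - (s - 1) / s + 1
      = (s - 1) * (completedRiemannZeta₀ s - 1 / s - 1 / (1 - s)) := by
    field_simp
    ring
  rw [this, div_eq_mul_inv]
  ring

lemma Zfun_differentiableOn : DifferentiableOn ℂ Zfun U := by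
  refine DifferentiableOn.mul ?_ (differentiable_Gammaℝ_inv.differentiableOn)
  refine DifferentiableOn.add ?_ (differentiableOn_const 1)
  refine DifferentiableOn.sub ?_ ?_
  · exact ((differentiable_id.sub_const 1).mul differentiable_completedZeta₀).differentiableOn
  · refine DifferentiableOn.div ((differentiable_id.sub_const 1).differentiableOn)
      differentiableOn_id (fun s hs => ?_)
    intro h0
    rw [h0] at hs
    simp only [U, Set.mem_setOf_eq, Complex.zero_re] at hs
    exact lt_irrefl 0 hs

lemma twoPow_differentiable : Differentiable ℂ (fun s : ℂ => (2 : ℂ) ^ ((1 : ℂ) - s)) :=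
  (differentiable_const (1 : ℂ)).sub differentiable_id |>.const_cpow (Or.inl two_ne_zero)

lemma key_identity : ∀ s ∈ U, (s - 1) * etaFun s = Zfun s * (1 - (2 : ℂ) ^ ((1 : ℂ) - s)) := by
  have hf : AnalyticOnNhd ℂ (fun s : ℂ => (s - 1) * etaFun s) U :=
    (((differentiable_id.sub_const 1).differentiableOn).mul etaFun_differentiableOn).analyticOnNhd
      isOpen_U
  have hg : AnalyticOnNhd ℂ (fun s : ℂ => Zfun s * (1 - (2 : ℂ) ^ ((1 : ℂ) - s))) U :=
    (Zfun_differentiableOn.mul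
      (((differentiable_const (1:ℂ)).sub twoPow_differentiable).differentiableOn)).analyticOnNhd
      isOpen_U
  have hpre : IsPreconnected U := (convex_halfSpace_re_gt 0).isPreconnected
  have h2U : (2 : ℂ) ∈ U := by simp [U]
  have hev : (fun s : ℂ => (s - 1) * etaFun s)
      =ᶠ[nhds (2 : ℂ)] (fun s : ℂ => Zfun s * (1 - (2 : ℂ) ^ ((1 : ℂ) - s))) := by
    have hmem : {s : ℂ | 1 < s.re} ∈ nhds (2 : ℂ) :=
      (isOpen_lt continuous_const Complex.continuous_re).mem_nhds (by simp)
    filter_upwards [hmem] with s hs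
    have hs1 : 1 < s.re := hs
    have hsne0 : s ≠ 0 := by intro h; rw [h] at hs1; norm_num at hs1
    have hsne1 : s ≠ 1 := by intro h; rw [h] at hs1; norm_num at hs1
    rw [etaFun_eq_of_one_lt hs1, Zfun_eq hsne0 hsne1]
    ring
  exact fun s hs => hf.eqOn_of_preconnected_of_eventuallyEq hg hpre h2U hev hs

theorem eta_tendsto {s : ℂ} (hs0 : 0 < s.re) (hs1 : s.re < 1) :
    Tendsto (fun N : ℕ => ∑ n ∈ Finset.range N, etaTerm s n) atTop
      (𝓝 ((1 - (2 : ℂ) ^ ((1 : ℂ) - s)) * riemannZeta s)) := by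
  have hsne0 : s ≠ 0 := by intro h; rw [h] at hs0; norm_num at hs0
  have hsne1 : s ≠ 1 := by intro h; rw [h] at hs1; norm_num at hs1
  have hkey := key_identity s hs0
  rw [Zfun_eq hsne0 hsne1] at hkey
  have hcancel : etaFun s = (1 - (2 : ℂ) ^ ((1 : ℂ) - s)) * riemannZeta s := by
    have hne : s - 1 ≠ 0 := sub_ne_zero.2 hsne1
    apply mul_left_cancel₀ hne
    rw [hkey]; ring
  exact hcancel ▸ tendsto_partial_eta hs0


lemma cpow_div_nat {y : ℝ} (hy : 0 < y) (n : ℕ) (c : ℂ) :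
    (((y / ((n + 1 : ℕ) : ℝ)) : ℝ) : ℂ) ^ c = (y : ℂ) ^ c * ((n + 1 : ℕ) : ℂ) ^ (-c) := by
  have h1 : ((y / ((n + 1 : ℕ) : ℝ) : ℝ) : ℂ)
      = ((y : ℝ) : ℂ) * (((((n + 1 : ℕ) : ℝ))⁻¹ : ℝ) : ℂ) := by push_cast; ring
  rw [h1, mul_cpow_ofReal_nonneg hy.le (by positivity)]
  congr 1
  rw [show (((((n + 1 : ℕ) : ℝ))⁻¹ : ℝ) : ℂ) = (((n + 1 : ℕ) : ℂ))⁻¹ by push_cast; ring]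
  rw [Complex.inv_cpow _ _ ?harg, ← Complex.cpow_neg]
  case harg =>
    rw [Complex.natCast_arg]
    exact Ne.symm Real.pi_ne_zero

lemma cpow_mul_nat {x : ℝ} (hx : 0 < x) (m : ℕ) (c : ℂ) :
    ((((m + 1 : ℕ) : ℝ) * x : ℝ) : ℂ) ^ c = ((m + 1 : ℕ) : ℂ) ^ c * (x : ℂ) ^ c := by
  rw [show ((((m + 1 : ℕ) : ℝ) * x : ℝ) : ℂ) = ((((m + 1 : ℕ) : ℝ)) : ℂ) * ((x : ℝ) : ℂ) by
      push_cast; ring,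
    mul_cpow_ofReal_nonneg (by positivity) hx.le]
  norm_num

end EtaAux


open EtaAux

/-- Action of the supersymmetric partner Hamiltonian `H₊ = A(ω) A†(ω)` on `x^{-σ+iρ}`.
Here `h` is the result of applying `A†(ω)` to `x^{-σ+iρ}` (defined for `y > 0` as the limit of
the partial sums), and the claim is that applying `A(ω)` to `h` gives a convergent series
whose sum is
`(1 - 2^{σ-i(ρ+ω/2)})(1 - 2^{(1-σ)+i(ρ+ω/2)}) ζ(σ-i(ρ+ω/2)) ζ(1-σ+i(ρ+ω/2)) x^{-σ+iρ}`. -/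
theorem Hplus_action (σ ρ ω : ℝ) (h0 : 0 < σ) (h1 : σ < 1) (h : ℝ → ℂ)
    (hh : ∀ y : ℝ, 0 < y →
      Filter.Tendsto
        (fun N : ℕ => (y : ℂ) ^ (Complex.I * (ω : ℂ) / 2) *
          ∑ n ∈ Finset.range N, (-1 : ℂ) ^ n * ((n + 1 : ℕ) : ℂ)⁻¹ *
            (((y / ((n + 1 : ℕ) : ℝ)) : ℝ) : ℂ) ^ (Complex.I * (ω : ℂ) / 2) *
            (((y / ((n + 1 : ℕ) : ℝ)) : ℝ) : ℂ) ^ (-(σ : ℂ) + Complex.I * (ρ : ℂ)))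
        Filter.atTop (nhds (h y)))
    (x : ℝ) (hx : 0 < x) :
    Filter.Tendsto
      (fun N : ℕ => (x : ℂ) ^ (-(Complex.I * (ω : ℂ)) / 2) *
        ∑ m ∈ Finset.range N, (-1 : ℂ) ^ m *
          ((((m + 1 : ℕ) : ℝ) * x : ℝ) : ℂ) ^ (-(Complex.I * (ω : ℂ)) / 2) *
          h (((m + 1 : ℕ) : ℝ) * x))
      Filter.atTop
      (nhds ((1 - (2 : ℂ) ^ ((σ : ℂ) - Complex.I * ((ρ : ℂ) + (ω : ℂ) / 2))) *
        (1 - (2 : ℂ) ^ ((1 - (σ : ℂ)) + Complex.I * ((ρ : ℂ) + (ω : ℂ) / 2))) *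
        riemannZeta ((σ : ℂ) - Complex.I * ((ρ : ℂ) + (ω : ℂ) / 2)) *
        riemannZeta (1 - (σ : ℂ) + Complex.I * ((ρ : ℂ) + (ω : ℂ) / 2)) *
        (x : ℂ) ^ (-(σ : ℂ) + Complex.I * (ρ : ℂ)))) := by
  have hnegdiv : -(Complex.I * (ω : ℂ)) / 2 = -(Complex.I * (ω : ℂ) / 2) := by ring
  rw [hnegdiv]
  set c1 : ℂ := Complex.I * (ω : ℂ) / 2 with hc1
  set c2 : ℂ := -(σ : ℂ) + Complex.I * (ρ : ℂ) with hc2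
  set w : ℂ := 1 + c1 + c2 with hw
  set w2 : ℂ := -(c1 + c2) with hw2
  have hc1re : c1.re = 0 := by rw [hc1]; simp
  have hc2re : c2.re = -σ := by rw [hc2]; simp
  have hwre : w.re = 1 - σ := by
    rw [hw, Complex.add_re, Complex.add_re, Complex.one_re, hc1re, hc2re]; ring
  have hw2re : w2.re = σ := by
    rw [hw2, Complex.neg_re, Complex.add_re, hc1re, hc2re]; ring
  have hw0 : 0 < w.re := by rw [hwre]; linarith
  have hw1 : w.re < 1 := by rw [hwre]; linarith
  have hw20 : 0 < w2.re := by rw [hw2re]; linarith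
  have hw21 : w2.re < 1 := by rw [hw2re]; linarith
  have h1w : (1 : ℂ) - w = w2 := by rw [hw, hw2]; ring
  have h1w2 : (1 : ℂ) - w2 = w := by rw [hw, hw2]; ring
  set E : ℂ := (1 - (2 : ℂ) ^ ((1 : ℂ) - w)) * riemannZeta w with hE
  -- Step 1: identify h y
  have hyval : ∀ y : ℝ, 0 < y →
      h y = (y : ℂ) ^ (c1 + c1 + c2) * E := by
    intro y hy
    have hyne : (y : ℂ) ≠ 0 := Complex.ofReal_ne_zero.2 hy.ne'
    have base := (eta_tendsto hw0 hw1).const_mul ((y : ℂ) ^ (c1 + c1 + c2))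
    refine tendsto_nhds_unique (hh y hy) (base.congr fun N => ?_)
    rw [Finset.mul_sum, Finset.mul_sum]
    refine Finset.sum_congr rfl fun n _ => ?_
    have hnne : ((n + 1 : ℕ) : ℂ) ≠ 0 := Nat.cast_ne_zero.2 (by omega)
    have hy3 : (y : ℂ) ^ (c1 + c1 + c2) = (y:ℂ)^c1 * (y:ℂ)^c1 * (y:ℂ)^c2 := by
      rw [Complex.cpow_add _ _ hyne, Complex.cpow_add _ _ hyne]
    have hn3 : ((n + 1 : ℕ) : ℂ) ^ (-w)
        = ((n + 1 : ℕ) : ℂ)⁻¹ * ((n + 1 : ℕ) : ℂ) ^ (-c1) * ((n + 1 : ℕ) : ℂ) ^ (-c2) := by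
      rw [show -w = (-1 : ℂ) + -c1 + -c2 by rw [hw]; ring,
        Complex.cpow_add _ _ hnne, Complex.cpow_add _ _ hnne, Complex.cpow_neg_one]
    rw [etaTerm, cpow_div_nat hy n c1, cpow_div_nat hy n c2, hy3, hn3]
    ring
  -- Step 2: outer sum
  have hcongrN : ∀ N : ℕ,
      (E * (x : ℂ) ^ c2) * (∑ m ∈ Finset.range N, etaTerm w2 m)
      = (x : ℂ) ^ (-c1) *
        ∑ m ∈ Finset.range N, (-1 : ℂ) ^ m *
          ((((m + 1 : ℕ) : ℝ) * x : ℝ) : ℂ) ^ (-c1) * h (((m + 1 : ℕ) : ℝ) * x) := by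
    intro N
    rw [Finset.mul_sum, Finset.mul_sum]
    refine Finset.sum_congr rfl fun m _ => ?_
    have hux : (0 : ℝ) < ((m + 1 : ℕ) : ℝ) * x := by positivity
    have hxne : (x : ℂ) ≠ 0 := Complex.ofReal_ne_zero.2 hx.ne'
    have hune : ((((m + 1 : ℕ) : ℝ) * x : ℝ) : ℂ) ≠ 0 := Complex.ofReal_ne_zero.2 hux.ne'
    rw [hyval _ hux]
    have hfuse : ((((m + 1 : ℕ) : ℝ) * x : ℝ) : ℂ) ^ (-c1) *
        ((((m + 1 : ℕ) : ℝ) * x : ℝ) : ℂ) ^ (c1 + c1 + c2)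
        = ((((m + 1 : ℕ) : ℝ) * x : ℝ) : ℂ) ^ (c1 + c2) := by
      rw [← Complex.cpow_add _ _ hune]; congr 1; ring
    rw [cpow_mul_nat hx m (c1 + c2)] at hfuse
    have hm : ((m + 1 : ℕ) : ℂ) ^ (-w2) = ((m + 1 : ℕ) : ℂ) ^ (c1 + c2) := by
      congr 1; rw [hw2]; ring
    have hx2 : (x : ℂ) ^ (-c1) * (x : ℂ) ^ (c1 + c2) = (x : ℂ) ^ c2 := by
      rw [← Complex.cpow_add _ _ hxne]; congr 1; ring
    rw [etaTerm, hm]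
    linear_combination ((-1 : ℂ) ^ m * E) *
        (-((x : ℂ) ^ (-c1)) * hfuse - ((m + 1 : ℕ) : ℂ) ^ (c1 + c2) * hx2)
  have hA : (σ : ℂ) - Complex.I * ((ρ : ℂ) + (ω : ℂ) / 2) = w2 := by
    rw [hw2, hc1, hc2]; push_cast; ring
  have hB : (1 : ℂ) - (σ : ℂ) + Complex.I * ((ρ : ℂ) + (ω : ℂ) / 2) = w := by
    rw [hw, hc1, hc2]; push_cast; ring
  rw [hA, hB]
  refine Tendsto.congr hcongrN ?_
  have hlim := (eta_tendsto hw20 hw21).const_mul (E * (x : ℂ) ^ c2)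
  have hval : (1 - (2 : ℂ) ^ w2) * (1 - (2 : ℂ) ^ w) * riemannZeta w2 * riemannZeta w *
      (x : ℂ) ^ c2
      = (E * (x : ℂ) ^ c2) * ((1 - (2 : ℂ) ^ ((1 : ℂ) - w2)) * riemannZeta w2) := by
    rw [hE, h1w, h1w2]; ring
  rw [hval]
  exact hlim
end

section
/- Let ω, λ be real numbers with ζ(1/2 + i·λ) = 0, set ρ = ω/2 - λ, and for y > 0 set g(y) = y^{-iω/2} · Σ_{n=1}^∞ (-1)^{n+1} (n·y)^{-iω/2} (n·y)^{-1/2 + iρ}. Then for every real x > 0, the series x^{iω/2} · Σ_{m=1}^∞ (-1)^{m+1} m^{-1} (x/m)^{iω/2} · g(x/m) converges (as the limit of its partial sums) to 0; that is, the ground state ψ₀(x) = x^{-1/2 + i(ω/2 - λ)} satisfies H₋ ψ₀ = 0, so the ground state energy vanishes. -/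
open Filter Finset Complex Set

namespace GSEnergy

noncomputable def pf (k : ℕ) (w : ℂ) : ℂ :=
  (((2 * k + 1 : ℕ) : ℂ)) ^ (-w) - (((2 * k + 2 : ℕ) : ℂ)) ^ (-w)

lemma pf_norm_le {w : ℂ} (hw : 0 < w.re) (k : ℕ) :
    ‖pf k w‖ ≤ ‖w‖ * ((2 * (k : ℝ) + 1) : ℝ) ^ (-w.re - 1) := by
  set a : ℝ := 2 * (k : ℝ) + 1 with ha
  have hk0 : (0:ℝ) ≤ (k:ℝ) := Nat.cast_nonneg k
  have ha1 : (1 : ℝ) ≤ a := by simp only [ha]; linarith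
  have hder : ∀ t ∈ Icc a (a + 1),
      HasDerivWithinAt (fun y : ℝ => (y : ℂ) ^ (-w)) ((-w) * (t : ℂ) ^ (-w - 1)) (Icc a (a+1)) t := by
    intro t ht
    have ht0 : (0 : ℝ) < t := lt_of_lt_of_le one_pos (ha1.trans ht.1)
    have h0 : (t : ℂ) ∈ slitPlane := Complex.ofReal_mem_slitPlane.2 ht0
    have := ((Complex.hasStrictDerivAt_cpow_const (c := -w) h0).hasDerivAt).comp_ofReal
    exact this.hasDerivWithinAt
  have hbound : ∀ t ∈ Icc a (a + 1),
      ‖(-w) * (t : ℂ) ^ (-w - 1)‖ ≤ ‖w‖ * a ^ (-w.re - 1) := by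
    intro t ht
    have ht0 : (0 : ℝ) < t := lt_of_lt_of_le one_pos (ha1.trans ht.1)
    rw [norm_mul, norm_neg]
    have habs : ‖(t : ℂ) ^ (-w - 1)‖ = t ^ (-w.re - 1) := by
      rw [Complex.norm_cpow_eq_rpow_re_of_pos ht0]
      norm_num
    rw [habs]
    refine mul_le_mul_of_nonneg_left ?_ (norm_nonneg w)
    exact Real.antitoneOn_rpow_Ioi_of_exponent_nonpos (by linarith)
      (mem_Ioi.2 (by positivity)) (mem_Ioi.2 ht0) ht.1
  have key := Convex.norm_image_sub_le_of_norm_hasDerivWithin_le hder hbound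
    (convex_Icc a (a+1)) (Set.left_mem_Icc.2 (by linarith)) (Set.right_mem_Icc.2 (by linarith))
  have : ‖((a + 1 : ℝ) : ℂ) ^ (-w) - ((a : ℝ) : ℂ) ^ (-w)‖ ≤ ‖w‖ * a ^ (-w.re - 1) := by
    simpa using key
  rw [pf]
  have e1 : (((2 * k + 1 : ℕ) : ℂ)) = ((a : ℝ) : ℂ) := by push_cast [ha]; ring
  have e2 : (((2 * k + 2 : ℕ) : ℂ)) = (((a + 1 : ℝ)) : ℂ) := by push_cast [ha]; ring
  rw [e1, e2, norm_sub_rev]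
  exact this

lemma summable_aux {c : ℝ} (hc : c < -1) : Summable (fun k : ℕ => (2 * (k:ℝ) + 1) ^ c) := by
  have h1 : Summable (fun k : ℕ => ((k:ℝ) + 1) ^ c) := by
    have := Real.summable_nat_rpow (p := c).2 hc
    have := (summable_nat_add_iff (f := fun n : ℕ => (n : ℝ) ^ c) 1).2 this
    simpa using this
  refine Summable.of_nonneg_of_le (fun k => by positivity) (fun k => ?_) h1
  have hk0 : (0:ℝ) ≤ (k:ℝ) := Nat.cast_nonneg k
  exact Real.antitoneOn_rpow_Ioi_of_exponent_nonpos (by linarith)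
    (Set.mem_Ioi.2 (by linarith)) (Set.mem_Ioi.2 (by linarith)) (by linarith)

lemma summable_pf {w : ℂ} (hw : 0 < w.re) : Summable (fun k => pf k w) := by
  refine Summable.of_norm ?_
  refine Summable.of_nonneg_of_le (fun k => norm_nonneg _) (fun k => pf_norm_le hw k) ?_
  exact (summable_aux (by linarith)).mul_left _



noncomputable def F (w : ℂ) : ℂ := ∑' k, pf k w

lemma isOpen_S : IsOpen {w : ℂ | 0 < w.re} := isOpen_lt continuous_const continuous_re

lemma diffF : DifferentiableOn ℂ F {w : ℂ | 0 < w.re} := by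
  have h1 : TendstoLocallyUniformlyOn (fun (N : ℕ) w => ∑ k ∈ Finset.range N, pf k w) F
      atTop {w : ℂ | 0 < w.re} := by
    rw [tendstoLocallyUniformlyOn_iff_forall_isCompact isOpen_S]
    intro K hKS hK
    rcases K.eq_empty_or_nonempty with rfl | hne
    · simp [TendstoUniformlyOn]
    obtain ⟨z₀, hz₀K, hmin⟩ := hK.exists_isMinOn hne continuous_re.continuousOn
    obtain ⟨z₁, hz₁K, hmax⟩ := hK.exists_isMaxOn hne continuous_norm.continuousOn
    set ε := z₀.re with hε
    have hε0 : 0 < ε := hKS hz₀K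
    set R := ‖z₁‖ with hR
    have hR0 : 0 ≤ R := norm_nonneg _
    refine tendstoUniformlyOn_tsum_nat
      (u := fun k => R * (2 * (k:ℝ) + 1) ^ (-ε - 1)) ?_ ?_
    · exact (summable_aux (by linarith)).mul_left R
    · intro k w hw
      have h2 : w.re ≥ ε := hmin hw
      have h3 : ‖w‖ ≤ R := hmax hw
      calc ‖pf k w‖ ≤ ‖w‖ * (2 * (k:ℝ) + 1) ^ (-w.re - 1) :=
            pf_norm_le (lt_of_lt_of_le hε0 h2) k
        _ ≤ R * (2 * (k:ℝ) + 1) ^ (-ε - 1) := by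
            have hk0 : (0:ℝ) ≤ (k:ℝ) := Nat.cast_nonneg k
            refine mul_le_mul h3 ?_ (Real.rpow_nonneg (by linarith) _) hR0
            exact Real.rpow_le_rpow_of_exponent_le (by linarith) (by linarith)
  refine h1.differentiableOn (Filter.Eventually.of_forall fun N => Differentiable.differentiableOn (by
      refine Differentiable.fun_sum fun k _ => Differentiable.sub ?_ ?_ <;>
      exact differentiable_id.neg.const_cpow (Or.inl (Nat.cast_ne_zero.2 (by omega))))) isOpen_S


lemma F_eq_of_one_lt {w : ℂ} (hw : 1 < w.re) :
    F w = (1 - 2 ^ ((1:ℂ) - w)) * riemannZeta w := by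
  set h : ℕ → ℂ := fun n => ((n + 1 : ℕ) : ℂ) ^ (-w) with hh
  have hsum : Summable h := by
    have h0 : Summable (fun n : ℕ => (n : ℂ) ^ (-w)) := by
      have := summable_one_div_nat_cpow.2 hw
      refine this.congr fun n => ?_
      rw [cpow_neg, one_div]
    have := (summable_nat_add_iff (f := fun n : ℕ => (n : ℂ) ^ (-w)) 1).2 h0
    exact this.congr fun n => by norm_cast
  have hζ : HasSum h (riemannZeta w) := by
    rw [zeta_eq_tsum_one_div_nat_add_one_cpow hw]
    have : ∑' n : ℕ, 1 / ((n : ℂ) + 1) ^ w = ∑' n, h n := by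
      refine tsum_congr fun n => ?_
      show 1 / ((n : ℂ) + 1) ^ w = ((n + 1 : ℕ) : ℂ) ^ (-w)
      rw [cpow_neg, one_div]
      norm_cast
    rw [this]
    exact hsum.hasSum
  have heven : Summable (fun k => h (2 * k)) :=
    hsum.comp_injective (fun a b hab => by omega)
  have hodd : Summable (fun k => h (2 * k + 1)) :=
    hsum.comp_injective (fun a b hab => by omega)
  have hoddval : ∑' k, h (2 * k + 1) = 2 ^ (-w) * riemannZeta w := by
    have : ∀ k : ℕ, h (2 * k + 1) = 2 ^ (-w) * h k := by
      intro k
      rw [hh]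
      simp only
      have e : (((2 * k + 1 + 1 : ℕ) : ℂ)) = ((2:ℝ) : ℂ) * ((((k + 1 : ℕ) : ℝ)) : ℂ) := by
        push_cast; ring
      rw [e, mul_cpow_ofReal_nonneg (by norm_num) (by positivity)]
      norm_num
    rw [tsum_congr this, tsum_mul_left, hζ.tsum_eq]
  have hsplit : ∑' k, h (2 * k) + ∑' k, h (2 * k + 1) = riemannZeta w := by
    rw [tsum_even_add_odd heven hodd, hζ.tsum_eq]
  have hFw : F w = ∑' k, h (2 * k) - ∑' k, h (2 * k + 1) := by
    rw [F, ← Summable.tsum_sub heven hodd]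
    refine tsum_congr fun k => ?_
    have e : 2 * k + 1 + 1 = 2 * k + 2 := by omega
    simp only [pf, hh, e]
  have h2 : (2 : ℂ) ^ ((1:ℂ) - w) = 2 * 2 ^ (-w) := by
    rw [sub_eq_add_neg, cpow_add _ _ (two_ne_zero), cpow_one]
  have heq : ∑' k, h (2 * k) = riemannZeta w - 2 ^ (-w) * riemannZeta w := by
    linear_combination hsplit - hoddval
  rw [hFw, heq, hoddval, h2]
  ring


lemma preconn : IsPreconnected {w : ℂ | 0 < w.re ∧ w ≠ 1} := by
  have hC1 : Convex ℝ {w : ℂ | 0 < w.re ∧ 0 < w.im} :=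
    (convex_halfSpace_re_gt 0).inter (convex_halfSpace_im_gt 0)
  have hC2 : Convex ℝ {w : ℂ | 0 < w.re ∧ w.im < 0} :=
    (convex_halfSpace_re_gt 0).inter (convex_halfSpace_im_lt 0)
  have hC3 : Convex ℝ {w : ℂ | 0 < w.re ∧ w.re < 1} :=
    (convex_halfSpace_re_gt 0).inter (convex_halfSpace_re_lt 1)
  have hC4 : Convex ℝ {w : ℂ | 1 < w.re} := convex_halfSpace_re_gt 1
  have hx1 : ((1/2 : ℝ) + (1/2 : ℝ) * I : ℂ) ∈ {w : ℂ | 0 < w.re ∧ w.re < 1} := by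
    simp only [Set.mem_setOf_eq, Complex.add_re, Complex.add_im, Complex.ofReal_re,
      Complex.ofReal_im, Complex.mul_I_re, Complex.mul_I_im]; norm_num
  have hx1' : ((1/2 : ℝ) + (1/2 : ℝ) * I : ℂ) ∈ {w : ℂ | 0 < w.re ∧ 0 < w.im} := by
    simp only [Set.mem_setOf_eq, Complex.add_re, Complex.add_im, Complex.ofReal_re,
      Complex.ofReal_im, Complex.mul_I_re, Complex.mul_I_im]; norm_num
  have hx2 : ((1/2 : ℝ) + (-(1/2) : ℝ) * I : ℂ) ∈ {w : ℂ | 0 < w.re ∧ w.re < 1} := by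
    simp only [Set.mem_setOf_eq, Complex.add_re, Complex.add_im, Complex.ofReal_re,
      Complex.ofReal_im, Complex.mul_I_re, Complex.mul_I_im]; norm_num
  have hx2' : ((1/2 : ℝ) + (-(1/2) : ℝ) * I : ℂ) ∈ {w : ℂ | 0 < w.re ∧ w.im < 0} := by
    simp only [Set.mem_setOf_eq, Complex.add_re, Complex.add_im, Complex.ofReal_re,
      Complex.ofReal_im, Complex.mul_I_re, Complex.mul_I_im]; norm_num
  have hx3 : ((2 : ℝ) + (1 : ℝ) * I : ℂ) ∈ {w : ℂ | 0 < w.re ∧ 0 < w.im} := by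
    simp only [Set.mem_setOf_eq, Complex.add_re, Complex.add_im, Complex.ofReal_re,
      Complex.ofReal_im, Complex.mul_I_re, Complex.mul_I_im]; norm_num
  have hx3' : ((2 : ℝ) + (1 : ℝ) * I : ℂ) ∈ {w : ℂ | 1 < w.re} := by
    simp only [Set.mem_setOf_eq, Complex.add_re, Complex.ofReal_re, Complex.mul_I_re,
      Complex.ofReal_im]; norm_num
  have hP1 : IsPreconnected ({w : ℂ | 0 < w.re ∧ w.re < 1} ∪ {w : ℂ | 0 < w.re ∧ 0 < w.im}) :=
    IsPreconnected.union _ hx1 hx1' hC3.isPreconnected hC1.isPreconnected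
  have hP2 : IsPreconnected (({w : ℂ | 0 < w.re ∧ w.re < 1} ∪ {w : ℂ | 0 < w.re ∧ 0 < w.im})
      ∪ {w : ℂ | 0 < w.re ∧ w.im < 0}) :=
    IsPreconnected.union _ (Or.inl hx2) hx2' hP1 hC2.isPreconnected
  have hP3 : IsPreconnected ((({w : ℂ | 0 < w.re ∧ w.re < 1} ∪ {w : ℂ | 0 < w.re ∧ 0 < w.im})
      ∪ {w : ℂ | 0 < w.re ∧ w.im < 0}) ∪ {w : ℂ | 1 < w.re}) :=
    IsPreconnected.union _ (Or.inl (Or.inr hx3)) hx3' hP2 hC4.isPreconnected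
  have hEq : {w : ℂ | 0 < w.re ∧ w ≠ 1} =
      (({w : ℂ | 0 < w.re ∧ w.re < 1} ∪ {w : ℂ | 0 < w.re ∧ 0 < w.im})
      ∪ {w : ℂ | 0 < w.re ∧ w.im < 0}) ∪ {w : ℂ | 1 < w.re} := by
    ext w
    simp only [Set.mem_setOf_eq, Set.mem_union]
    constructor
    · rintro ⟨hre, hne⟩
      rcases lt_trichotomy w.im 0 with him | him | him
      · exact Or.inl (Or.inr ⟨hre, him⟩)
      · rcases lt_trichotomy w.re 1 with h1 | h1 | h1
        · exact Or.inl (Or.inl (Or.inl ⟨hre, h1⟩))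
        · exact absurd (Complex.ext (h1.trans Complex.one_re.symm) (him.trans Complex.one_im.symm)) hne
        · exact Or.inr h1
      · exact Or.inl (Or.inl (Or.inr ⟨hre, him⟩))
    · intro hmem
      rcases hmem with ((⟨hre, h1⟩ | ⟨hre, him⟩) | ⟨hre, him⟩) | h1
      · exact ⟨hre, fun h => by rw [h, Complex.one_re] at h1; norm_num at h1⟩
      · exact ⟨hre, fun h => by rw [h, Complex.one_im] at him; norm_num at him⟩
      · exact ⟨hre, fun h => by rw [h, Complex.one_im] at him; norm_num at him⟩
      · exact ⟨by linarith, fun h => by rw [h, Complex.one_re] at h1; norm_num at h1⟩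
  rw [hEq]
  exact hP3

lemma F_eq_on {w : ℂ} (hw : 0 < w.re) (hw1 : w ≠ 1) :
    F w = (1 - 2 ^ ((1:ℂ) - w)) * riemannZeta w := by
  set U : Set ℂ := {w : ℂ | 0 < w.re ∧ w ≠ 1} with hU
  have hUopen : IsOpen U := by
    refine IsOpen.inter isOpen_S isOpen_ne
  have hFa : AnalyticOnNhd ℂ F U :=
    (diffF.analyticOnNhd isOpen_S).mono (fun z hz => hz.1)
  have hGa : AnalyticOnNhd ℂ (fun z => (1 - 2 ^ ((1:ℂ) - z)) * riemannZeta z) U := by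
    refine DifferentiableOn.analyticOnNhd (fun z hz => DifferentiableAt.differentiableWithinAt ?_)
      hUopen
    refine DifferentiableAt.mul ?_ (differentiableAt_riemannZeta hz.2)
    exact (differentiableAt_const 1).sub
      (((differentiableAt_const 1).sub differentiableAt_id).const_cpow (Or.inl two_ne_zero))
  have h2U : (2 : ℂ) ∈ U := by
    constructor <;> simp
  have hev : F =ᶠ[nhds 2] (fun z => (1 - 2 ^ ((1:ℂ) - z)) * riemannZeta z) := by
    have hop : IsOpen {z : ℂ | 1 < z.re} := isOpen_lt continuous_const continuous_re
    refine Filter.eventuallyEq_of_mem (hop.mem_nhds (by simp)) fun z hz => F_eq_of_one_lt hz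
  exact hFa.eqOn_of_preconnected_of_eventuallyEq hGa preconn h2U hev ⟨hw, hw1⟩


noncomputable def T (s : ℂ) (N : ℕ) : ℂ :=
  ∑ n ∈ Finset.range N, (-1 : ℂ) ^ n * ((n + 1 : ℕ) : ℂ) ^ (-s)

lemma T_pair (s : ℂ) (N : ℕ) : T s (2 * N) = ∑ k ∈ Finset.range N, pf k s := by
  induction N with
  | zero => simp [T]
  | succ N ih =>
    have e2 : 2 * (N + 1) = 2 * N + 1 + 1 := by ring
    rw [e2, T, Finset.sum_range_succ, Finset.sum_range_succ, ← T, ih, Finset.sum_range_succ]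
    have h1 : (-1 : ℂ) ^ (2 * N) = 1 := by rw [pow_mul]; norm_num
    have h2 : (-1 : ℂ) ^ (2 * N + 1) = -1 := by rw [pow_succ, h1]; ring
    have h3 : 2 * N + 1 + 1 = 2 * N + 2 := by omega
    rw [h1, h2, h3, pf]
    ring

end GSEnergy

open GSEnergy

open Filter Finset Complex

/-- If `ζ(1/2 + iλ) = 0`, `ρ = ω/2 - λ`, and `g = A(ω) ψ₀` (defined for `y > 0` as the limit
of the partial sums below), then for every `x > 0` the series defining `(A†(ω) g)(x)`
converges (as the limit of its partial sums) to `0`: the ground state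
`ψ₀(x) = x^{-1/2+i(ω/2-λ)}` satisfies `H₋ ψ₀ = 0`, so the ground state energy vanishes. -/
theorem ground_state_energy_vanishes (ω lam : ℝ)
    (hzero : riemannZeta ((1 / 2 : ℂ) + Complex.I * (lam : ℂ)) = 0)
    (ρ : ℝ) (hρ : ρ = ω / 2 - lam) (g : ℝ → ℂ)
    (hg : ∀ y : ℝ, 0 < y →
      Filter.Tendsto
        (fun N : ℕ => (y : ℂ) ^ (-(Complex.I * (ω : ℂ)) / 2) *
          ∑ n ∈ Finset.range N, (-1 : ℂ) ^ n *
            ((((n + 1 : ℕ) : ℝ) * y : ℝ) : ℂ) ^ (-(Complex.I * (ω : ℂ)) / 2) *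
            ((((n + 1 : ℕ) : ℝ) * y : ℝ) : ℂ) ^ (-(1 / 2 : ℂ) + Complex.I * (ρ : ℂ)))
        Filter.atTop (nhds (g y)))
    (x : ℝ) (hx : 0 < x) :
    Filter.Tendsto
      (fun N : ℕ => (x : ℂ) ^ (Complex.I * (ω : ℂ) / 2) *
        ∑ m ∈ Finset.range N, (-1 : ℂ) ^ m * ((m + 1 : ℕ) : ℂ)⁻¹ *
          (((x / ((m + 1 : ℕ) : ℝ)) : ℝ) : ℂ) ^ (Complex.I * (ω : ℂ) / 2) *
          g (x / ((m + 1 : ℕ) : ℝ)))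
      Filter.atTop (nhds 0) := by
  set s : ℂ := (1 / 2 : ℂ) + Complex.I * (lam : ℂ) with hs
  have hsre : s.re = 1 / 2 := by
    rw [hs]
    simp [Complex.add_re, Complex.mul_re]
  have hs0 : 0 < s.re := by rw [hsre]; norm_num
  have hs1 : s ≠ 1 := fun h => by rw [h, Complex.one_re] at hsre; norm_num at hsre
  have hFs : F s = 0 := by rw [F_eq_on hs0 hs1, hzero, mul_zero]
  have hpfsum : Filter.Tendsto (fun N : ℕ => ∑ k ∈ Finset.range N, pf k s)
      Filter.atTop (nhds 0) := by
    have h1 := (summable_pf hs0).hasSum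
    rw [show (∑' k, pf k s) = F s from rfl, hFs] at h1
    exact h1.tendsto_sum_nat
  have hTlim : Filter.Tendsto (fun N => T s (2 * N)) Filter.atTop (nhds 0) := by
    have : (fun N => T s (2 * N)) = fun N => ∑ k ∈ Finset.range N, pf k s :=
      funext fun N => T_pair s N
    rw [this]; exact hpfsum
  have h2mono : Filter.Tendsto (fun N : ℕ => 2 * N) Filter.atTop Filter.atTop :=
    Filter.tendsto_atTop_mono (fun n => by simp only [id_eq]; omega) Filter.tendsto_id
  have gzero : ∀ y : ℝ, 0 < y → g y = 0 := by
    intro y hy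
    have hsub := (hg y hy).comp h2mono
    have hform : ∀ N : ℕ, ((y : ℂ) ^ (-(Complex.I * (ω : ℂ)) / 2) *
        ∑ n ∈ Finset.range N, (-1 : ℂ) ^ n *
          ((((n + 1 : ℕ) : ℝ) * y : ℝ) : ℂ) ^ (-(Complex.I * (ω : ℂ)) / 2) *
          ((((n + 1 : ℕ) : ℝ) * y : ℝ) : ℂ) ^ (-(1 / 2 : ℂ) + Complex.I * (ρ : ℂ)))
        = (y : ℂ) ^ (-(Complex.I * (ω : ℂ)) / 2) * ((y : ℂ) ^ (-s) * T s N) := by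
      intro N
      congr 1
      rw [T, Finset.mul_sum]
      refine Finset.sum_congr rfl fun n _ => ?_
      have hne : ((((n + 1 : ℕ) : ℝ) * y : ℝ) : ℂ) ≠ 0 := by
        rw [Complex.ofReal_ne_zero]
        positivity
      have hab : (-(Complex.I * (ω : ℂ)) / 2) + (-(1 / 2 : ℂ) + Complex.I * (ρ : ℂ)) = -s := by
        rw [hρ, hs]; push_cast; ring
      rw [mul_assoc, ← Complex.cpow_add _ _ hne, hab, Complex.ofReal_mul,
        mul_cpow_ofReal_nonneg (by positivity) hy.le]
      push_cast
      ring
    have hsub' : Filter.Tendsto (fun N : ℕ => (y : ℂ) ^ (-(Complex.I * (ω : ℂ)) / 2) *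
        ((y : ℂ) ^ (-s) * T s (2 * N))) Filter.atTop (nhds (g y)) := by
      refine Filter.Tendsto.congr (fun N => ?_) hsub
      exact hform (2 * N)
    have hlim2 : Filter.Tendsto (fun N : ℕ => (y : ℂ) ^ (-(Complex.I * (ω : ℂ)) / 2) *
        ((y : ℂ) ^ (-s) * T s (2 * N))) Filter.atTop (nhds 0) := by
      have := (hTlim.const_mul ((y : ℂ) ^ (-s))).const_mul ((y : ℂ) ^ (-(Complex.I * (ω : ℂ)) / 2))
      simpa using this
    exact tendsto_nhds_unique hsub' hlim2
  have hzero_sum : ∀ N : ℕ, (x : ℂ) ^ (Complex.I * (ω : ℂ) / 2) *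
      ∑ m ∈ Finset.range N, (-1 : ℂ) ^ m * ((m + 1 : ℕ) : ℂ)⁻¹ *
        (((x / ((m + 1 : ℕ) : ℝ)) : ℝ) : ℂ) ^ (Complex.I * (ω : ℂ) / 2) *
        g (x / ((m + 1 : ℕ) : ℝ)) = 0 := by
    intro N
    have hterm : ∀ m ∈ Finset.range N, (-1 : ℂ) ^ m * ((m + 1 : ℕ) : ℂ)⁻¹ *
        (((x / ((m + 1 : ℕ) : ℝ)) : ℝ) : ℂ) ^ (Complex.I * (ω : ℂ) / 2) *
        g (x / ((m + 1 : ℕ) : ℝ)) = 0 := by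
      intro m _
      rw [gzero _ (div_pos hx (by positivity)), mul_zero]
    rw [Finset.sum_congr rfl hterm, Finset.sum_const_zero, mul_zero]
  exact Filter.Tendsto.congr (fun N => (hzero_sum N).symm) tendsto_const_nhds
end
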